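/- Let 0→h→ĝ→g→0 be a non-abelian extension with section s and cocycle (ω,θ,ρ), and let Ker λ = {γ ∈ Aut_h(ĝ) : p∘γ∘s = id_g, γ|_h = id_h}. Then the map K: Ker λ → Z¹_nab(g,h) defined by K(γ)(x) = s(x) − γ(s(x)) is a group isomorphism, where Z¹_nab(g,h) is the abelian group of non-abelian 1-cocycles. -/
import Mathlib


universe u v w

/-- A Lie triple system over a field `k`. -/
structure LTS (k : Type u) (V : Type v) [Field k] [AddCommGroup V] [Module k V] where
  t : V →ₗ[k] V →ₗ[k] V →ₗ[k] V
  alt : ∀ x y, t x x y = 0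
  cyc : ∀ x y z, t x y z + t y z x + t z x y = 0
  leib : ∀ a b x y z, t a b (t x y z) =
    t (t a b x) y z + t x (t a b y) z + t x y (t a b z)

/-- `D_θ(x,y) a = θ(y,x) a - θ(x,y) a`. -/
def Dmap {G H : Type*} [AddCommGroup H] (θ : G → G → H → H) (x y : G) (a : H) : H :=
  θ y x a - θ x y a

/-- `D_ρ(x)(a,b) = ρ(x)(b,a) - ρ(x)(a,b)`. -/
def Drho {G H : Type*} [AddCommGroup H] (ρ : G → H → H → H) (x : G) (a b : H) : H :=
  ρ x b a - ρ x a b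

/-- A non-abelian 3-cocycle on `g` with values in `h`: identities (3.2)–(3.14) of the paper,
together with the wedge conditions on `ω`, `θ`, `ρ`. -/
def IsNACocycle {G H : Type*} [AddCommGroup H]
    (tg : G → G → G → G) (th : H → H → H → H)
    (ω : G → G → G → H) (θ : G → G → H → H) (ρ : G → H → H → H) : Prop :=
  (∀ x y, ω x x y = 0) ∧
  (∀ x a, θ x x a = 0) ∧
  (∀ x a, ρ x a a = 0) ∧
  (∀ x y z, ω x y z + ω y z x + ω z x y = 0) ∧
  (∀ x1 x2 y1 y2 y3,
    Dmap θ x1 x2 (ω y1 y2 y3) + ω x1 x2 (tg y1 y2 y3) =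
      ω (tg x1 x2 y1) y2 y3 + θ y2 y3 (ω x1 x2 y1)
      + ω y1 (tg x1 x2 y2) y3 - θ y1 y3 (ω x1 x2 y2)
      + ω y1 y2 (tg x1 x2 y3) + Dmap θ y1 y2 (ω x1 x2 y3)) ∧
  (∀ x y z w a,
    Dmap θ x y (θ z w a) - θ z w (Dmap θ x y a) =
      θ (tg x y z) w a + θ z (tg x y w) a
      - Drho ρ w (ω x y z) a - ρ z a (ω x y w)) ∧
  (∀ x y z w a,
    θ x (tg y z w) a - ρ x a (ω y z w) =
      θ z w (θ x y a) - θ y w (θ x z a) + Dmap θ y z (θ x w a)) ∧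
  (∀ x y z a b,
    Dmap θ x y (ρ z a b) =
      ρ z (Dmap θ x y a) b + ρ (tg x y z) a b + th (ω x y z) a b
      + ρ z a (Dmap θ x y b)) ∧
  (∀ x y z a b,
    Dmap θ y z (ρ x a b) =
      ρ x a (Dmap θ y z b) - ρ z (θ x y a) b + ρ y (θ x z a) b) ∧
  (∀ x y z a b,
    θ y z (ρ x a b) =
      ρ x a (θ y z b) - Drho ρ z (θ x y a) b - ρ y b (θ x z a)) ∧
  (∀ x y a b c,
    Dmap θ x y (th a b c) =
      th (Dmap θ x y a) b c + th a (Dmap θ x y b) c + th a b (Dmap θ x y c)) ∧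
  (∀ x y a b c,
    ρ x a (ρ y b c) =
      ρ y (ρ x a b) c + ρ y b (ρ x a c) - th (θ x y a) b c) ∧
  (∀ x y a b c,
    th a b (θ x y c) =
      θ x y (th a b c) - Drho ρ y (Drho ρ x a b) c - ρ x c (Drho ρ y a b)) ∧
  (∀ x a b c d,
    th a b (ρ x c d) =
      ρ x (th a b c) d - th c (Drho ρ x a b) d + ρ x c (th a b d)) ∧
  (∀ x a b c d,
    ρ x a (th b c d) =
      th (ρ x a b) c d + th b (ρ x a c) d + th b c (ρ x a d))

/-- The bracket `[x+a, y+b, z+c]_{(ω,θ,ρ)}` on `g ⊕ h`. -/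
def nabBr {G H : Type*} [AddCommGroup H]
    (tg : G → G → G → G) (th : H → H → H → H)
    (ω : G → G → G → H) (θ : G → G → H → H) (ρ : G → H → H → H) :
    G × H → G × H → G × H → G × H :=
  fun p q r =>
    (tg p.1 q.1 r.1,
      ω p.1 q.1 r.1 + Dmap θ p.1 q.1 r.2 + θ q.1 r.1 p.2 - θ p.1 r.1 q.2
        + Drho ρ r.1 p.2 q.2 + ρ p.1 q.2 r.2 - ρ q.1 p.2 r.2 + th p.2 q.2 r.2)

/-- Equivalence of two non-abelian 3-cocycles via `φ : g → h`
(equations (3.15)–(3.17) of the paper). -/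
def CocycleEquiv {G H : Type*} [AddCommGroup H]
    (tg : G → G → G → G) (th : H → H → H → H)
    (ω1 : G → G → G → H) (θ1 : G → G → H → H) (ρ1 : G → H → H → H)
    (ω2 : G → G → G → H) (θ2 : G → G → H → H) (ρ2 : G → H → H → H)
    (φ : G → H) : Prop :=
  (∀ x y z,
    ω1 x y z - ω2 x y z =
      θ2 x z (φ y) - Dmap θ2 x y (φ z) + ρ2 x (φ y) (φ z) - θ2 y z (φ x)
        + Drho ρ2 z (φ x) (φ y) - ρ2 y (φ x) (φ z)
        - th (φ x) (φ y) (φ z) + φ (tg x y z)) ∧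
  (∀ x y a,
    θ1 x y a - θ2 x y a =
      ρ2 x a (φ y) - Drho ρ2 y a (φ x) + th a (φ x) (φ y)) ∧
  (∀ x a b, ρ1 x a b - ρ2 x a b = th a (φ x) b)

/-- The operation `i_f(g)` on degree-one cochains (from equations (4.2)–(4.4)). -/
def ibrack {M : Type*} [AddCommGroup M] (f g : M → M → M → M) :
    M → M → M → M → M → M :=
  fun x1 y1 x2 y2 z =>
    f (g x1 y1 x2) y2 z + f x2 (g x1 y1 y2) z
      - (f x1 y1 (g x2 y2 z) - f x2 y2 (g x1 y1 z))

/-- The graded bracket `[f,g]_{Lts} = (-1)^{1·1} i_f(g) - i_g(f)` of two degree-one cochains. -/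
def brLts {M : Type*} [AddCommGroup M] (f g : M → M → M → M) :
    M → M → M → M → M → M :=
  fun x1 y1 x2 y2 z =>
    -(ibrack f g x1 y1 x2 y2 z) - ibrack g f x1 y1 x2 y2 z

/-- Non-abelian 1-cocycles on `g` with values in `h`. -/
def IsZ1 {G H : Type*} [AddCommGroup H]
    (tg : G → G → G → G) (th : H → H → H → H)
    (θ : G → G → H → H) (ρ : G → H → H → H) (φ : G → H) : Prop :=
  (∀ x a b, th a (φ x) b = 0) ∧
  (∀ x y a, th a (φ x) (φ y) - Drho ρ y a (φ x) + ρ x a (φ y) = 0) ∧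
  (∀ x y z,
    Drho ρ z (φ x) (φ y) - ρ y (φ x) (φ z) - θ y z (φ x)
      + ρ x (φ y) (φ z) + θ x z (φ y) - Dmap θ x y (φ z)
      = th (φ x) (φ y) (φ z) - φ (tg x y z))

/-- the map `K : ker λ → Z¹_nab(g,h)`, `K(γ)(x) = s x - γ (s x)` (valued in
`h` via `i`), is a group isomorphism: `K(γ)` is a well-defined non-abelian 1-cocycle,
`K` is additive on composites, injective, and surjective. -/
theorem statement18 {k G H E : Type*} [Field k] [AddCommGroup G] [Module k G]
    [AddCommGroup H] [Module k H] [AddCommGroup E] [Module k E]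
    (Lg : LTS k G) (Lh : LTS k H) (LE : LTS k E)
    (i : H →ₗ[k] E) (p : E →ₗ[k] G)
    (ihom : ∀ a b c, i (Lh.t a b c) = LE.t (i a) (i b) (i c))
    (phom : ∀ x y z, p (LE.t x y z) = Lg.t (p x) (p y) (p z))
    (iinj : Function.Injective i) (psurj : Function.Surjective p)
    (hexact : LinearMap.range i = LinearMap.ker p)
    (s : G →ₗ[k] E) (hs : ∀ x, p (s x) = x)
    (θ : G → G → H → H) (ρ : G → H → H → H)
    (hθ : ∀ x y a, i (θ x y a) = LE.t (i a) (s x) (s y))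
    (hρ : ∀ x a b, i (ρ x a b) = LE.t (s x) (i a) (i b)) :
    -- (a) K is well defined: every `γ ∈ ker λ` gives a non-abelian 1-cocycle
    (∀ γ : E ≃ₗ[k] E,
      (∀ x y z, γ (LE.t x y z) = LE.t (γ x) (γ y) (γ z)) →
      (∀ a, γ (i a) = i a) → (∀ x, p (γ (s x)) = x) →
      ∃ φ : G →ₗ[k] H, (∀ x, i (φ x) = s x - γ (s x)) ∧
        IsZ1 (fun x y z => Lg.t x y z) (fun a b c => Lh.t a b c) θ ρ (fun x => φ x)) ∧
    -- (b) K is a group homomorphism: `K(γ₁γ₂) = K(γ₁) + K(γ₂)`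
    (∀ γ1 γ2 : E ≃ₗ[k] E,
      (∀ x y z, γ1 (LE.t x y z) = LE.t (γ1 x) (γ1 y) (γ1 z)) →
      (∀ x y z, γ2 (LE.t x y z) = LE.t (γ2 x) (γ2 y) (γ2 z)) →
      (∀ a, γ1 (i a) = i a) → (∀ x, p (γ1 (s x)) = x) →
      (∀ a, γ2 (i a) = i a) → (∀ x, p (γ2 (s x)) = x) →
      ∀ φ1 φ2 : G →ₗ[k] H,
        (∀ x, i (φ1 x) = s x - γ1 (s x)) → (∀ x, i (φ2 x) = s x - γ2 (s x)) →
        ∀ x, i (φ1 x + φ2 x) = s x - γ1 (γ2 (s x))) ∧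
    -- (c) K is injective
    (∀ γ : E ≃ₗ[k] E,
      (∀ x y z, γ (LE.t x y z) = LE.t (γ x) (γ y) (γ z)) →
      (∀ a, γ (i a) = i a) → (∀ x, p (γ (s x)) = x) →
      (∀ x, s x - γ (s x) = 0) → ∀ e, γ e = e) ∧
    -- (d) K is surjective
    (∀ φ : G →ₗ[k] H,
      IsZ1 (fun x y z => Lg.t x y z) (fun a b c => Lh.t a b c) θ ρ (fun x => φ x) →
      ∃ γ : E ≃ₗ[k] E,
        (∀ x y z, γ (LE.t x y z) = LE.t (γ x) (γ y) (γ z)) ∧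
        (∀ a, γ (i a) = i a) ∧ (∀ x, p (γ (s x)) = x) ∧
        (∀ x, i (φ x) = s x - γ (s x))) := by
    classical
  -- preliminaries
  have hpi : ∀ a : H, p (i a) = 0 := by
    intro a
    have h : i a ∈ LinearMap.ker p := hexact ▸ LinearMap.mem_range_self i a
    exact LinearMap.mem_ker.mp h
  have hker : ∀ e : E, p e = 0 → ∃ a : H, i a = e := by
    intro e he
    have h : e ∈ LinearMap.range i := by rw [hexact]; exact LinearMap.mem_ker.mpr he
    exact h
  have tswap : ∀ x y z : E, LE.t x y z = - LE.t y x z := by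
    intro x y z
    have h := LE.alt (x + y) z
    simp only [map_add, LinearMap.add_apply, LE.alt, zero_add, add_zero] at h
    linear_combination (norm := abel1) h
  refine ⟨?_, ?_, ?_, ?_⟩
  · -- (a) well-definedness
    intro γ hγt hγi hγp
    have hfix : ∀ e : E, p e = 0 → γ e = e := by
      intro e he
      obtain ⟨a, rfl⟩ := hker e he
      exact hγi a
    have hmem : ∀ x, s x - γ (s x) ∈ LinearMap.range i := by
      intro x
      rw [hexact, LinearMap.mem_ker, map_sub, hs, hγp, sub_self]
    obtain ⟨φ0, hiφ⟩ : ∃ φ0 : G →ₗ[k] H, ∀ x, i (φ0 x) = s x - γ (s x) := by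
      refine ⟨((LinearEquiv.ofInjective i iinj).symm.toLinearMap).comp
        (LinearMap.codRestrict (LinearMap.range i)
          (s - ((γ : E →ₗ[k] E).comp s)) ?_), ?_⟩
      · intro x
        simpa [LinearMap.sub_apply, LinearMap.comp_apply] using hmem x
      · intro x
        have key : ∀ y : LinearMap.range i,
            i ((LinearEquiv.ofInjective i iinj).symm y) = (y : E) := by
          intro y
          conv_rhs => rw [← LinearEquiv.apply_symm_apply (LinearEquiv.ofInjective i iinj) y]
          rw [LinearEquiv.ofInjective_apply]
        rw [LinearMap.comp_apply]
        rw [LinearEquiv.coe_coe]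
        rw [key]
        simp [LinearMap.codRestrict_apply, LinearMap.sub_apply, LinearMap.comp_apply]
    have hγs : ∀ x, γ (s x) = s x - i (φ0 x) := by
      intro x; rw [hiφ]; abel
    refine ⟨φ0, hiφ, ?_, ?_, ?_⟩
    · -- cond 1
      intro x a b
      apply iinj
      show i (Lh.t a (φ0 x) b) = i 0
      rw [map_zero, ihom]
      have key : LE.t (i a) (s x - i (φ0 x)) (i b) = LE.t (i a) (s x) (i b) := by
        conv_lhs => rw [← hγs x, ← hγi a, ← hγi b, ← hγt]
        refine hfix _ ?_
        rw [phom, hpi]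
        simp
      simp only [map_sub, LinearMap.sub_apply] at key
      linear_combination (norm := abel1) -key
    · -- cond 2
      intro x y a
      apply iinj
      show i (Lh.t a (φ0 x) (φ0 y) - Drho ρ y a (φ0 x) + ρ x a (φ0 y)) = i 0
      simp only [Drho, map_add, map_sub, map_zero, ihom, hρ]
      have key : LE.t (i a) (s x - i (φ0 x)) (s y - i (φ0 y)) = LE.t (i a) (s x) (s y) := by
        conv_lhs => rw [← hγs x, ← hγs y, ← hγi a, ← hγt]
        refine hfix _ ?_
        rw [phom, hpi]
        simp
      simp only [map_sub, LinearMap.sub_apply] at key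
      linear_combination (norm := abel1) key + LE.cyc (i a) (i (φ0 x)) (s y)
        + tswap (i a) (s x) (i (φ0 y)) - tswap (s y) (i (φ0 x)) (i a)
    · -- cond 3
      intro x y z
      apply iinj
      show i (Drho ρ z (φ0 x) (φ0 y) - ρ y (φ0 x) (φ0 z) - θ y z (φ0 x)
        + ρ x (φ0 y) (φ0 z) + θ x z (φ0 y) - Dmap θ x y (φ0 z))
        = i (Lh.t (φ0 x) (φ0 y) (φ0 z) - φ0 (Lg.t x y z))
      simp only [Dmap, Drho, map_add, map_sub, ihom, hθ, hρ]
      have key : LE.t (s x - i (φ0 x)) (s y - i (φ0 y)) (s z - i (φ0 z))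
          = LE.t (s x) (s y) (s z) - i (φ0 (Lg.t x y z)) := by
        rw [← hγs x, ← hγs y, ← hγs z, ← hγt, hiφ]
        have h := hfix (LE.t (s x) (s y) (s z) - s (Lg.t x y z)) (by
          rw [map_sub, phom, hs, hs, hs, hs, sub_self])
        rw [map_sub] at h
        linear_combination (norm := abel1) h
      simp only [map_sub, LinearMap.sub_apply] at key
      linear_combination (norm := abel1) key - tswap (s y) (i (φ0 x)) (i (φ0 z))
        + tswap (i (φ0 y)) (s x) (s z) - LE.cyc (i (φ0 x)) (i (φ0 y)) (s z)
        + tswap (i (φ0 y)) (s z) (i (φ0 x)) + LE.cyc (i (φ0 z)) (s x) (s y)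
        - tswap (s y) (i (φ0 z)) (s x)
  · -- (b) homomorphism
    intro γ1 γ2 hγ1t hγ2t hγ1i hγ1p hγ2i hγ2p φ1 φ2 h1 h2 x
    have h2' : γ2 (s x) = s x - i (φ2 x) := by rw [h2]; abel
    rw [map_add, h1, h2', map_sub, hγ1i]
    abel
  · -- (c) injective
    intro γ hγt hγi hγp h0 e
    have hfix : ∀ e : E, p e = 0 → γ e = e := by
      intro e he
      obtain ⟨a, rfl⟩ := hker e he
      exact hγi a
    have hsγ : ∀ x, γ (s x) = s x := by
      intro x
      have h := h0 x
      rw [sub_eq_zero] at h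
      exact h.symm
    have h1 : γ e = γ (s (p e)) + γ (e - s (p e)) := by
      rw [← map_add]
      congr 1
      abel
    rw [h1, hsγ, hfix _ (by rw [map_sub, hs, sub_self])]
    abel
  · -- (d) surjective
    intro φ hφ
    obtain ⟨h1, h2, h3⟩ := hφ
    set q : E →ₗ[k] E := i ∘ₗ (φ ∘ₗ p) with hq
    have hqapp : ∀ e, q e = i (φ (p e)) := by
      intro e; rw [hq]; simp [LinearMap.comp_apply]
    have hq2 : ∀ e, q (q e) = 0 := by
      intro e
      rw [hqapp, hqapp, hpi, map_zero, map_zero]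
    have hcomp1 : (LinearMap.id - q).comp (LinearMap.id + q) = LinearMap.id := by
      ext e
      simp only [LinearMap.comp_apply, LinearMap.sub_apply, LinearMap.add_apply,
        LinearMap.id_apply, map_add]
      rw [hq2]
      abel
    have hcomp2 : (LinearMap.id + q).comp (LinearMap.id - q) = LinearMap.id := by
      ext e
      simp only [LinearMap.comp_apply, LinearMap.sub_apply, LinearMap.add_apply,
        LinearMap.id_apply, map_sub]
      rw [hq2]
      abel
    set γ : E ≃ₗ[k] E := LinearEquiv.ofLinear (LinearMap.id - q) (LinearMap.id + q)
      hcomp1 hcomp2 with hγ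
    have hγapp : ∀ e, γ e = e - i (φ (p e)) := by
      intro e
      rw [hγ]
      rw [LinearEquiv.ofLinear_apply, LinearMap.sub_apply, LinearMap.id_apply, hqapp]
    have hγi2 : ∀ a, γ (i a) = i a := by
      intro a
      rw [hγapp, hpi, map_zero, map_zero, sub_zero]
    have hγp2 : ∀ x, p (γ (s x)) = x := by
      intro x
      rw [hγapp, map_sub, hs, hpi, sub_zero]
    have hγφ : ∀ x, i (φ x) = s x - γ (s x) := by
      intro x
      rw [hγapp, hs]
      abel
    -- cocycle identities in E
    have z1 : ∀ (a : H) (x : G) (b : H), LE.t (i a) (i (φ x)) (i b) = 0 := by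
      intro a x b
      have h := congrArg i (h1 x a b)
      simpa [ihom] using h
    have z2 : ∀ (x y : G) (a : H),
        LE.t (i a) (i (φ x)) (i (φ y)) - LE.t (s y) (i (φ x)) (i a)
          + LE.t (s y) (i a) (i (φ x)) + LE.t (s x) (i a) (i (φ y)) = 0 := by
      intro x y a
      have h := congrArg i (h2 x y a)
      simp only [Drho, map_add, map_sub, map_zero, ihom, hρ] at h
      linear_combination (norm := abel1) h
    have zB : ∀ (a : H) (x : G) (b : H), LE.t (i (φ x)) (i a) (i b) = 0 := by
      intro a x b
      linear_combination (norm := abel1) tswap (i (φ x)) (i a) (i b) - z1 a x b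
    have zC : ∀ (a b : H) (x : G), LE.t (i a) (i b) (i (φ x)) = 0 := by
      intro a b x
      linear_combination (norm := abel1) LE.cyc (i a) (i b) (i (φ x)) - z1 b x a - zB a x b
    have m1 : ∀ (b : H) (x y : G),
        LE.t (i b) (i (φ x)) (s y) + LE.t (i b) (s x) (i (φ y)) = 0 := by
      intro b x y
      linear_combination (norm := abel1) (-(z2 x y b)) + z1 b x (φ y)
        + LE.cyc (i b) (i (φ x)) (s y) - tswap (i (φ x)) (s y) (i b)
        + tswap (s x) (i b) (i (φ y))
    have m2 : ∀ (a : H) (x y : G),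
        LE.t (i (φ x)) (i a) (s y) + LE.t (s x) (i a) (i (φ y)) = 0 := by
      intro a x y
      linear_combination (norm := abel1) z2 x y a - z1 a x (φ y)
        + LE.cyc (i (φ x)) (i a) (s y) - tswap (i a) (s y) (i (φ x))
    have m3 : ∀ (a : H) (x y : G),
        LE.t (i (φ x)) (s y) (i a) + LE.t (s x) (i (φ y)) (i a) = 0 := by
      intro a x y
      linear_combination (norm := abel1) z2 x y a - z2 y x a - z1 a x (φ y)
        + z1 a y (φ x) + tswap (i (φ x)) (s y) (i a)
    have mF : ∀ x y z : G,
        i (φ (Lg.t x y z)) =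
          LE.t (i (φ x)) (s y) (s z) + LE.t (s x) (i (φ y)) (s z)
            + LE.t (s x) (s y) (i (φ z)) - LE.t (i (φ x)) (i (φ y)) (s z)
            - LE.t (i (φ x)) (s y) (i (φ z)) - LE.t (s x) (i (φ y)) (i (φ z)) := by
      intro x y z
      have h := congrArg i (h3 x y z)
      simp only [Dmap, Drho, map_add, map_sub, ihom, hθ, hρ] at h
      linear_combination (norm := abel1) h + z1 (φ x) y (φ z)
        + LE.cyc (i (φ x)) (i (φ y)) (s z) - tswap (i (φ y)) (s z) (i (φ x))
        - tswap (i (φ y)) (s x) (s z) - LE.cyc (i (φ z)) (s x) (s y)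
        + tswap (s y) (i (φ z)) (s x) + tswap (i (φ x)) (s y) (i (φ z))
    have hpj : ∀ (x : G) (b : H), p (s x + i b) = x := by
      intro x b; rw [map_add, hs, hpi, add_zero]
    have main : ∀ (x1 x2 x3 : G) (b1 b2 b3 : H),
        γ (LE.t (s x1 + i b1) (s x2 + i b2) (s x3 + i b3)) =
          LE.t (γ (s x1 + i b1)) (γ (s x2 + i b2)) (γ (s x3 + i b3)) := by
      intro x1 x2 x3 b1 b2 b3
      have hpt : p (LE.t (s x1 + i b1) (s x2 + i b2) (s x3 + i b3)) = Lg.t x1 x2 x3 := by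
        rw [phom, hpj, hpj, hpj]
      rw [hγapp, hγapp, hγapp, hγapp, hpj, hpj, hpj, hpt]
      simp only [map_add, map_sub, LinearMap.add_apply, LinearMap.sub_apply]
      linear_combination (norm := abel1) (-(mF x1 x2 x3)) + m1 b1 x2 x3 + m2 b2 x1 x3
        + m3 b3 x1 x2 + zB b2 x1 b3 + z1 b1 x2 b3 + zC b1 b2 x3 - z1 (φ x1) x2 b3
        - zB b2 x1 (φ x3) - z1 b1 x2 (φ x3) + z1 (φ x1) x2 (φ x3)
    refine ⟨γ, ?_, hγi2, hγp2, hγφ⟩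
    intro e1 e2 e3
    obtain ⟨b1, hb1⟩ := hker (e1 - s (p e1)) (by rw [map_sub, hs, sub_self])
    obtain ⟨b2, hb2⟩ := hker (e2 - s (p e2)) (by rw [map_sub, hs, sub_self])
    obtain ⟨b3, hb3⟩ := hker (e3 - s (p e3)) (by rw [map_sub, hs, sub_self])
    have he1 : e1 = s (p e1) + i b1 := by rw [hb1]; abel
    have he2 : e2 = s (p e2) + i b2 := by rw [hb2]; abel
    have he3 : e3 = s (p e3) + i b3 := by rw [hb3]; abel
    rw [he1, he2, he3]
    exact main _ _ _ b1 b2 b3
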